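/- Suppose h : [T,∞) → (0,∞) is continuous and for fixed constants 0 < α₁ < 1 < α₂ with α₁α₂ = 1 satisfies, for all τ_a, τ ≥ T with τ ≥ τ_a: α₁ exp(−4α₂ ∫_{τ_a}^{τ} h) ≤ h(τ)/h(τ_a) ≤ α₂ exp(−4α₁ ∫_{τ_a}^{τ} h). Then for all τ ≥ τ_a, α₁ h(τ_a)/[1 + 4h(τ_a)(τ−τ_a)]^{α₂/α₁} ≤ h(τ) ≤ α₂ h(τ_a)/[1 + 4h(τ_a)(τ−τ_a)]^{α₁/α₂}. -/

import Mathlib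

open Set intervalIntegral MeasureTheory Topology

private lemma mono_aux {f : ℝ → ℝ} {a b : ℝ} (hab : a ≤ b)
    (hf : ContinuousOn f (Icc a b))
    (hd : ∀ x ∈ Ioo a b, ∃ d, HasDerivAt f d x ∧ 0 ≤ d) : f a ≤ f b := by
  have hdiff : DifferentiableOn ℝ f (interior (Icc a b)) := by
    rw [interior_Icc]
    intro x hx
    exact ((hd x hx).choose_spec.1.differentiableAt).differentiableWithinAt
  have := monotoneOn_of_deriv_nonneg (convex_Icc a b) hf hdiff (by
    rw [interior_Icc]
    intro x hx
    obtain ⟨d, hd1, hd2⟩ := hd x hx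
    rw [hd1.deriv]; exact hd2)
  exact this (left_mem_Icc.2 hab) (right_mem_Icc.2 hab) hab

/-- Power-law bounds for `h` from the exponential-integral sandwich: if
`α₁ e^{-4α₂∫h} ≤ h(τ)/h(τ_a) ≤ α₂ e^{-4α₁∫h}` with `0 < α₁ < 1 < α₂`,
`α₁α₂ = 1`, then
`α₁ h(τ_a)/(1+4h(τ_a)(τ-τ_a))^{α₂/α₁} ≤ h(τ) ≤ α₂ h(τ_a)/(1+4h(τ_a)(τ-τ_a))^{α₁/α₂}`. -/
theorem stmt_14 (h : ℝ → ℝ) (T α₁ α₂ : ℝ)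
    (hα₁ : 0 < α₁) (hα₁' : α₁ < 1) (hα₂ : 1 < α₂) (hprod : α₁ * α₂ = 1)
    (hpos : ∀ τ ≥ T, 0 < h τ) (hc : ContinuousOn h (Set.Ici T))
    (hyp : ∀ τa τ, T ≤ τa → τa ≤ τ →
      α₁ * Real.exp (-4*α₂ * ∫ s in τa..τ, h s) ≤ h τ / h τa ∧
      h τ / h τa ≤ α₂ * Real.exp (-4*α₁ * ∫ s in τa..τ, h s)) :
    ∀ τa τ, T ≤ τa → τa ≤ τ →
      α₁ * h τa / (1 + 4 * h τa * (τ - τa)) ^ (α₂/α₁) ≤ h τ ∧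
      h τ ≤ α₂ * h τa / (1 + 4 * h τa * (τ - τa)) ^ (α₁/α₂) := by
  intro τa τ hTa hat
  have hTτ : T ≤ τ := hTa.trans hat
  have hpa : 0 < h τa := hpos τa hTa
  set g : ℝ → ℝ := fun t => ∫ s in τa..t, h s with hg
  -- continuity of g on Icc τa τ
  have hsub : Icc τa τ ⊆ Ici T := fun x hx => hTa.trans hx.1
  have hint : IntegrableOn h (uIcc τa τ) volume := by
    refine (hc.mono ?_).integrableOn_compact isCompact_uIcc
    rw [uIcc_of_le hat]; exact hsub
  have hgc : ContinuousOn g (Icc τa τ) := by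
    have := continuousOn_primitive_interval (a := τa) (b := τ) (f := h) (μ := volume) hint
    rwa [uIcc_of_le hat] at this
  -- derivative of g at interior points
  have hgd : ∀ x ∈ Ioo τa τ, HasDerivAt g (h x) x := by
    intro x hx
    have hTx : T < x := lt_of_le_of_lt hTa hx.1
    have hci : IntervalIntegrable h volume τa x := by
      refine (hc.mono ?_).intervalIntegrable
      rw [uIcc_of_le hx.1.le]
      exact fun y hy => hTa.trans hy.1
    have hmeas : StronglyMeasurableAtFilter h (𝓝 x) volume := by
      refine ContinuousOn.stronglyMeasurableAtFilter isOpen_Ioi (hc.mono Ioi_subset_Ici_self) x hTx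
    have hca : ContinuousAt h x := hc.continuousAt (Ici_mem_nhds hTx)
    exact integral_hasDerivAt_right hci hmeas hca
  -- the hypothesis at (τa, x) for x in [τa, τ]
  have key : ∀ x ∈ Icc τa τ,
      α₁ * Real.exp (-(4*α₂) * g x) * h τa ≤ h x ∧ h x ≤ α₂ * Real.exp (-(4*α₁) * g x) * h τa := by
    intro x hx
    obtain ⟨h1, h2⟩ := hyp τa x hTa hx.1
    constructor
    · calc α₁ * Real.exp (-(4*α₂) * g x) * h τa = α₁ * Real.exp (-4*α₂ * g x) * h τa := by ring_nf
          _ ≤ h x / h τa * h τa := by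
              exact mul_le_mul_of_nonneg_right h1 hpa.le
          _ = h x := div_mul_cancel₀ _ hpa.ne'
    · calc h x = h x / h τa * h τa := (div_mul_cancel₀ _ hpa.ne').symm
        _ ≤ α₂ * Real.exp (-4*α₁ * g x) * h τa := mul_le_mul_of_nonneg_right h2 hpa.le
        _ = α₂ * Real.exp (-(4*α₁) * g x) * h τa := by ring_nf
  -- upper sandwich: exp(4 α₁ g τ) ≤ 1 + 4 h τa (τ - τa)
  have gzero : g τa = 0 := intervalIntegral.integral_same
  have upper : Real.exp (4 * α₁ * g τ) ≤ 1 + 4 * h τa * (τ - τa) := by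
    have := mono_aux (f := fun t => 1 + 4 * h τa * (t - τa) - Real.exp (4 * α₁ * g t)) hat
      (by fun_prop (disch := exact hgc)) ?_
    · simpa [gzero] using this
    · intro x hx
      have hd : HasDerivAt (fun t => 1 + 4 * h τa * (t - τa) - Real.exp (4 * α₁ * g t))
          (4 * h τa - 4 * α₁ * h x * Real.exp (4 * α₁ * g x)) x := by
        have h1 : HasDerivAt (fun t => 1 + 4 * h τa * (t - τa)) (4 * h τa) x := by
          simpa using ((hasDerivAt_id x).sub_const τa).const_mul (4 * h τa) |>.const_add 1
        have h2 : HasDerivAt (fun t => Real.exp (4 * α₁ * g t))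
            (Real.exp (4 * α₁ * g x) * (4 * α₁ * h x)) x :=
          (((hgd x hx).const_mul (4 * α₁)).exp)
        have := h1.sub h2
        exact this.congr_deriv (by ring)
      refine ⟨_, hd, ?_⟩
      have hkey := (key x ⟨hx.1.le, hx.2.le⟩).2
      have : 4 * α₁ * h x * Real.exp (4 * α₁ * g x) ≤ 4 * h τa := by
        have := mul_le_mul_of_nonneg_right hkey (Real.exp_nonneg (4 * α₁ * g x))
        calc 4 * α₁ * h x * Real.exp (4 * α₁ * g x)
            = 4 * α₁ * (h x * Real.exp (4 * α₁ * g x)) := by ring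
          _ ≤ 4 * α₁ * (α₂ * Real.exp (-(4*α₁) * g x) * h τa * Real.exp (4 * α₁ * g x)) := by
              refine mul_le_mul_of_nonneg_left this (by positivity)
          _ = 4 * (α₁ * α₂) * h τa * (Real.exp (-(4*α₁) * g x) * Real.exp (4 * α₁ * g x)) := by
              ring
          _ = 4 * h τa := by
              rw [← Real.exp_add, hprod]; ring_nf; rw [Real.exp_zero]; ring
      linarith
  -- lower sandwich: 1 + 4 h τa (τ - τa) ≤ exp(4 α₂ g τ)
  have lower : 1 + 4 * h τa * (τ - τa) ≤ Real.exp (4 * α₂ * g τ) := by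
    have := mono_aux (f := fun t => Real.exp (4 * α₂ * g t) - (1 + 4 * h τa * (t - τa))) hat
      (by fun_prop (disch := exact hgc)) ?_
    · simpa [gzero] using this
    · intro x hx
      have hd : HasDerivAt (fun t => Real.exp (4 * α₂ * g t) - (1 + 4 * h τa * (t - τa)))
          (4 * α₂ * h x * Real.exp (4 * α₂ * g x) - 4 * h τa) x := by
        have h1 : HasDerivAt (fun t => 1 + 4 * h τa * (t - τa)) (4 * h τa) x := by
          simpa using ((hasDerivAt_id x).sub_const τa).const_mul (4 * h τa) |>.const_add 1
        have h2 : HasDerivAt (fun t => Real.exp (4 * α₂ * g t))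
            (Real.exp (4 * α₂ * g x) * (4 * α₂ * h x)) x :=
          (((hgd x hx).const_mul (4 * α₂)).exp)
        have := h2.sub h1
        exact this.congr_deriv (by ring)
      refine ⟨_, hd, ?_⟩
      have hkey := (key x ⟨hx.1.le, hx.2.le⟩).1
      have : 4 * h τa ≤ 4 * α₂ * h x * Real.exp (4 * α₂ * g x) := by
        have := mul_le_mul_of_nonneg_right hkey (Real.exp_nonneg (4 * α₂ * g x))
        calc 4 * h τa
            = 4 * (α₁ * α₂) * h τa * (Real.exp (-(4*α₂) * g x) * Real.exp (4 * α₂ * g x)) := by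
              rw [← Real.exp_add, hprod]; ring_nf; rw [Real.exp_zero]; ring
          _ = 4 * α₂ * (α₁ * Real.exp (-(4*α₂) * g x) * h τa * Real.exp (4 * α₂ * g x)) := by
              ring
          _ ≤ 4 * α₂ * (h x * Real.exp (4 * α₂ * g x)) := by
              refine mul_le_mul_of_nonneg_left this (by positivity)
          _ = 4 * α₂ * h x * Real.exp (4 * α₂ * g x) := by ring
      linarith
  -- finish with rpow algebra
  set P : ℝ := 1 + 4 * h τa * (τ - τa) with hP
  have hP1 : (1:ℝ) ≤ P := by
    have : 0 ≤ 4 * h τa * (τ - τa) := mul_nonneg (by linarith) (by linarith)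
    linarith
  have hP0 : (0:ℝ) < P := lt_of_lt_of_le one_pos hP1
  obtain ⟨k1, k2⟩ := key τ (right_mem_Icc.2 hat)
  constructor
  · -- lower bound
    have hPle : Real.exp (4 * α₂ * g τ) ≤ P ^ (α₂/α₁) := by
      calc Real.exp (4 * α₂ * g τ) = Real.exp (4 * α₁ * g τ * (α₂/α₁)) := by
            congr 1; field_simp
        _ = Real.exp (4 * α₁ * g τ) ^ (α₂/α₁) := Real.exp_mul _ _
        _ ≤ P ^ (α₂/α₁) := Real.rpow_le_rpow (Real.exp_nonneg _) upper (div_nonneg (by linarith) hα₁.le)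
    have hexp : Real.exp (-(4*α₂) * g τ) = (Real.exp (4 * α₂ * g τ))⁻¹ := by
      rw [neg_mul, Real.exp_neg]
    calc α₁ * h τa / P ^ (α₂/α₁) ≤ α₁ * h τa / Real.exp (4 * α₂ * g τ) := by
          apply div_le_div_of_nonneg_left (by positivity) (Real.exp_pos _) hPle
      _ = α₁ * Real.exp (-(4*α₂) * g τ) * h τa := by
          rw [hexp, div_eq_mul_inv]; ring
      _ ≤ h τ := k1
  · -- upper bound
    have hPle : P ^ (α₁/α₂) ≤ Real.exp (4 * α₁ * g τ) := by
      calc P ^ (α₁/α₂) ≤ Real.exp (4 * α₂ * g τ) ^ (α₁/α₂) :=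
            Real.rpow_le_rpow hP0.le lower (div_nonneg hα₁.le (by linarith))
        _ = Real.exp (4 * α₂ * g τ * (α₁/α₂)) := (Real.exp_mul _ _).symm
        _ = Real.exp (4 * α₁ * g τ) := by congr 1; field_simp
    have hexp : Real.exp (-(4*α₁) * g τ) = (Real.exp (4 * α₁ * g τ))⁻¹ := by
      rw [neg_mul, Real.exp_neg]
    calc h τ ≤ α₂ * Real.exp (-(4*α₁) * g τ) * h τa := k2
      _ = α₂ * h τa / Real.exp (4 * α₁ * g τ) := by rw [hexp, div_eq_mul_inv]; ring
      _ ≤ α₂ * h τa / P ^ (α₁/α₂) := by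
          apply div_le_div_of_nonneg_left (by positivity) (by positivity) hPle
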